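/- Let Σ be a collection of n linear forms in R = K[x₁,...,x_k], and suppose the linear form ℓ occurs at least twice in Σ. Let Σ' := Σ \ {ℓ} (one copy removed) and Σ'' := Σ' \ {ℓ}. If I_a(Σ') : ℓ = I_{a−1}(Σ''), then I_a(Σ) : ℓ = I_{a−1}(Σ'). -/

import Mathlib

open MvPolynomial

/-- The ideal generated by all `a`-fold products of members of a multiset `Σ` of
polynomials. -/
noncomputable def foldProducts {K : Type*} [Field K] {k : ℕ}
    (Sig : Multiset (MvPolynomial (Fin k) K)) (a : ℕ) : Ideal (MvPolynomial (Fin k) K) :=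
  Ideal.span {p | ∃ T : Multiset (MvPolynomial (Fin k) K), T ≤ Sig ∧ Multiset.card T = a ∧
    p = T.prod}

lemma foldProducts_mono {K : Type*} [Field K] {k : ℕ}
    {S S' : Multiset (MvPolynomial (Fin k) K)} (h : S ≤ S') (a : ℕ) :
    foldProducts S a ≤ foldProducts S' a := by
  apply Ideal.span_mono
  rintro p ⟨T, hT, hc, rfl⟩
  exact ⟨T, hT.trans h, hc, rfl⟩

/-- If `ℓ` occurs at least twice in `Σ`, `Sig = Σ \ {ℓ}`, `Sig' = Sig \ {ℓ}`, and
`I_a(Sig) : ℓ = I_{a-1}(Sig')`, then `I_a(Σ) : ℓ = I_{a-1}(Sig)`. -/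
theorem stmt5 {K : Type*} [Field K] {k n : ℕ} [DecidableEq (MvPolynomial (Fin k) K)]
    (S : Multiset (MvPolynomial (Fin k) K)) (hcard : Multiset.card S = n)
    (hlin : ∀ p ∈ S, MvPolynomial.IsHomogeneous p 1)
    (ℓ : MvPolynomial (Fin k) K) (hl : 2 ≤ S.count ℓ)
    (a : ℕ) (ha1 : 1 ≤ a) (han : a ≤ n)
    (hcolon : (foldProducts (S.erase ℓ) a).colon (Ideal.span {ℓ})
      = foldProducts ((S.erase ℓ).erase ℓ) (a - 1)) :
    (foldProducts S a).colon (Ideal.span {ℓ}) = foldProducts (S.erase ℓ) (a - 1) := by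
  have hmem : ℓ ∈ S := Multiset.count_pos.mp (by omega)
  apply le_antisymm
  · intro f hf
    rw [Ideal.mem_colon_span_singleton] at hf
    have hdecomp : foldProducts S a ≤
        Ideal.span {ℓ} * foldProducts (S.erase ℓ) (a-1) ⊔ foldProducts (S.erase ℓ) a := by
      rw [foldProducts, Ideal.span_le]
      rintro p ⟨T, hT, hc, rfl⟩
      by_cases hlT : ℓ ∈ T
      · apply Submodule.mem_sup_left
        rw [Ideal.mem_span_singleton_mul]
        refine ⟨(T.erase ℓ).prod, Ideal.subset_span
          ⟨T.erase ℓ, Multiset.erase_le_erase ℓ hT, by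
            rw [Multiset.card_erase_of_mem hlT, hc, Nat.pred_eq_sub_one], rfl⟩, ?_⟩
        rw [← Multiset.prod_cons, Multiset.cons_erase hlT]
      · apply Submodule.mem_sup_right
        apply Ideal.subset_span
        refine ⟨T, ?_, hc, rfl⟩
        rw [Multiset.le_iff_count]
        intro x
        rcases eq_or_ne x ℓ with rfl | hx
        · simp [Multiset.count_eq_zero.mpr hlT]
        · rw [Multiset.count_erase_of_ne hx]
          exact Multiset.le_iff_count.mp hT x
    have hsup := hdecomp hf
    rw [Submodule.mem_sup] at hsup
    obtain ⟨y, hy, z, hz, hsum⟩ := hsup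
    rw [Ideal.mem_span_singleton_mul] at hy
    obtain ⟨g, hg, rfl⟩ := hy
    have hfg : (f - g) * ℓ ∈ foldProducts (S.erase ℓ) a := by
      have hz' : (f - g) * ℓ = z := by linear_combination -hsum
      rwa [hz']
    have hfg' : f - g ∈ foldProducts ((S.erase ℓ).erase ℓ) (a-1) := by
      rw [← hcolon, Ideal.mem_colon_span_singleton]; exact hfg
    have hsub : foldProducts ((S.erase ℓ).erase ℓ) (a-1) ≤ foldProducts (S.erase ℓ) (a-1) :=
      foldProducts_mono (Multiset.erase_le ℓ _) _
    have := add_mem (hsub hfg') hg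
    simpa using this
  · rw [foldProducts, Ideal.span_le]
    rintro p ⟨T, hT, hc, rfl⟩
    rw [SetLike.mem_coe, Ideal.mem_colon_span_singleton]
    apply Ideal.subset_span
    refine ⟨ℓ ::ₘ T, ?_, by simp [hc]; omega, by rw [Multiset.prod_cons]; ring⟩
    calc ℓ ::ₘ T ≤ ℓ ::ₘ S.erase ℓ := Multiset.cons_le_cons ℓ hT
      _ = S := Multiset.cons_erase hmem
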